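/- Let 𝔅 be the collection of nonempty compact convex subsets S of ℝ² that are comprehensive relative to 0 (whenever y ∈ S and 0 ≤ x ≤ y componentwise, then x ∈ S) and contain a point with both coordinates strictly positive. A solution is a function F : 𝔅 → ℝ² with F(S) ∈ S for all S ∈ 𝔅. Then F satisfies (i) weak Pareto optimality: for all S ∈ 𝔅 there is no y ∈ S with y₁ > F(S)₁ and y₂ > F(S)₂; (ii) symmetry: if S ∈ 𝔅 is invariant under the coordinate swap (x₁,x₂) ↦ (x₂,x₁), then F(S)₁ = F(S)₂; and (iii) strong monotonicity: for all S, S' ∈ 𝔅 with S ⊆ S', F(S) ≤ F(S') componentwise — if and only if F is the egalitarian solution, i.e., F(S) = (a_S, a_S) with a_S = max{t ∈ ℝ : (t,t) ∈ S} for every S ∈ 𝔅. -/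

import Mathlib

open Set

/-- `S` is comprehensive relative to the disagreement point `0`. -/
def Comprehensive (S : Set (ℝ × ℝ)) : Prop :=
  ∀ y ∈ S, ∀ x : ℝ × ℝ, 0 ≤ x.1 → 0 ≤ x.2 → x.1 ≤ y.1 → x.2 ≤ y.2 → x ∈ S

/-- A two-player bargaining problem with disagreement point `0`: nonempty, compact,
convex, comprehensive, and containing a strictly positive point. -/
def BargainingSet (S : Set (ℝ × ℝ)) : Prop :=
  S.Nonempty ∧ IsCompact S ∧ Convex ℝ S ∧ Comprehensive S ∧ ∃ p ∈ S, 0 < p.1 ∧ 0 < p.2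

namespace EgalAux

lemma zero_mem {S : Set (ℝ × ℝ)} (hS : BargainingSet S) : ((0, 0) : ℝ × ℝ) ∈ S := by
  obtain ⟨-, -, -, hcomp, p, hp, hp1, hp2⟩ := hS
  exact hcomp p hp (0, 0) le_rfl le_rfl hp1.le hp2.le

lemma exists_greatest {S : Set (ℝ × ℝ)} (hS : BargainingSet S) :
    ∃ a : ℝ, IsGreatest {t : ℝ | ((t, t) : ℝ × ℝ) ∈ S} a ∧ 0 < a := by
  obtain ⟨hne, hcpt, hconv, hcomp, p, hp, hp1, hp2⟩ := id hS
  have hm : ((min p.1 p.2, min p.1 p.2) : ℝ × ℝ) ∈ S :=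
    hcomp p hp _ (le_min hp1.le hp2.le) (le_min hp1.le hp2.le) (min_le_left _ _)
      (min_le_right _ _)
  have hDeq : {t : ℝ | ((t, t) : ℝ × ℝ) ∈ S} = Prod.fst '' (S ∩ {z : ℝ × ℝ | z.1 = z.2}) := by
    ext t
    constructor
    · intro ht; exact ⟨(t, t), ⟨ht, rfl⟩, rfl⟩
    · rintro ⟨z, ⟨hz, hd⟩, rfl⟩
      have hzz : (z.1, z.1) = z := by
        exact Prod.ext rfl hd
      simpa [Set.mem_setOf_eq, hzz] using hz
  have hDcpt : IsCompact {t : ℝ | ((t, t) : ℝ × ℝ) ∈ S} := by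
    rw [hDeq]
    exact (hcpt.inter_right (isClosed_eq continuous_fst continuous_snd)).image continuous_fst
  obtain ⟨a, ha⟩ := hDcpt.exists_isGreatest ⟨min p.1 p.2, hm⟩
  exact ⟨a, ha, lt_of_lt_of_le (lt_min hp1 hp2) (ha.2 hm)⟩

lemma le_or_le {S : Set (ℝ × ℝ)} (hS : BargainingSet S) {a : ℝ}
    (ha : IsGreatest {t : ℝ | ((t, t) : ℝ × ℝ) ∈ S} a) (ha0 : 0 < a)
    {y : ℝ × ℝ} (hy : y ∈ S) : y.1 ≤ a ∨ y.2 ≤ a := by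
  by_contra h
  push_neg at h
  obtain ⟨h1, h2⟩ := h
  have hmin : ((min y.1 y.2, min y.1 y.2) : ℝ × ℝ) ∈ S :=
    hS.2.2.2.1 y hy _ (le_min (ha0.le.trans h1.le) (ha0.le.trans h2.le))
      (le_min (ha0.le.trans h1.le) (ha0.le.trans h2.le)) (min_le_left _ _) (min_le_right _ _)
  have := ha.2 hmin
  have := lt_min h1 h2
  linarith

set_option maxHeartbeats 1000000 in
/-- Membership in the join of `S` with the box `[0,b]²`, in coordinates. -/
lemma mem_join_iff {S : Set (ℝ × ℝ)} {b : ℝ} {z : ℝ × ℝ} :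
    z ∈ convexJoin ℝ S (Icc ((0, 0) : ℝ × ℝ) (b, b)) ↔
      ∃ s ∈ S, ∃ θ w₁ w₂ : ℝ, 0 ≤ θ ∧ θ ≤ 1 ∧ 0 ≤ w₁ ∧ w₁ ≤ b ∧ 0 ≤ w₂ ∧ w₂ ≤ b ∧
        z.1 = (1 - θ) * s.1 + θ * w₁ ∧ z.2 = (1 - θ) * s.2 + θ * w₂ := by
  rw [mem_convexJoin]
  constructor
  · rintro ⟨s, hs, q, hq, hseg⟩
    rw [segment_eq_image] at hseg
    obtain ⟨θ, hθ, rfl⟩ := hseg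
    rw [Set.mem_Icc] at hq
    refine ⟨s, hs, θ, q.1, q.2, hθ.1, hθ.2, hq.1.1, hq.2.1, hq.1.2, hq.2.2, ?_, ?_⟩ <;>
      simp [smul_eq_mul]
  · rintro ⟨s, hs, θ, w₁, w₂, hθ0, hθ1, hw10, hw1b, hw20, hw2b, hz1, hz2⟩
    refine ⟨s, hs, (w₁, w₂), ?_, ?_⟩
    · rw [Set.mem_Icc]
      exact ⟨⟨hw10, hw20⟩, ⟨hw1b, hw2b⟩⟩
    · rw [segment_eq_image]
      refine ⟨θ, ⟨hθ0, hθ1⟩, ?_⟩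
      apply Prod.ext <;> simp [smul_eq_mul, hz1.symm, hz2.symm]

set_option maxHeartbeats 1000000 in
/-- The join of a bargaining set with the box `[0,b]²` is comprehensive. -/
lemma join_comprehensive {S : Set (ℝ × ℝ)} (hS : BargainingSet S) {b : ℝ} (hb : 0 < b) :
    Comprehensive (convexJoin ℝ S (Icc ((0, 0) : ℝ × ℝ) (b, b))) := by
  obtain ⟨hne, hcpt, hconv, hcomp, p, hp, hp1, hp2⟩ := id hS
  have h0S : ((0, 0) : ℝ × ℝ) ∈ S := zero_mem hS
  intro y hy x hx1 hx2 hxy1 hxy2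
  rw [mem_join_iff] at hy
  obtain ⟨s, hs, θ, w₁, w₂, hθ0, hθ1, hw10, hw1b, hw20, hw2b, hy1, hy2⟩ := hy
  rw [mem_join_iff]
  rw [hy1] at hxy1
  rw [hy2] at hxy2
  -- helper to conclude `x ∈ S`-side decomposition
  rcases eq_or_lt_of_le hθ1 with hθtop | hθlt
  · -- θ = 1 : x is in the box
    subst hθtop
    exact ⟨s, hs, 1, x.1, x.2, zero_le_one, le_rfl, hx1, by linarith, hx2, by linarith,
      by ring, by ring⟩
  rcases eq_or_lt_of_le hθ0 with hθbot | hθpos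
  · -- θ = 0 : x ≤ s, use comprehensiveness of S
    subst hθbot
    refine ⟨x, ?_, 0, 0, 0, le_rfl, zero_le_one, le_rfl, hb.le, le_rfl, hb.le, by ring, by ring⟩
    exact hcomp s hs x hx1 hx2 (by linarith) (by linarith)
  -- now 0 < θ < 1
  have h1θ : (0 : ℝ) < 1 - θ := by linarith
  by_cases hs1 : 0 ≤ s.1
  · by_cases hs2 : 0 ≤ s.2
    · -- both coordinates of s nonnegative: coordinatewise split
      have key : ∀ xi si qi : ℝ, 0 ≤ xi → 0 ≤ si → xi ≤ (1 - θ) * si + θ * qi → qi ≤ b →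
          ∃ u w, 0 ≤ u ∧ u ≤ si ∧ 0 ≤ w ∧ w ≤ b ∧ xi = (1 - θ) * u + θ * w := by
        intro xi si qi hxi hsi hxiy hqi
        rcases le_or_gt xi (θ * b) with h | h
        · refine ⟨0, xi / θ, le_rfl, hsi, div_nonneg hxi hθpos.le, ?_, by field_simp; ring⟩
          rw [div_le_iff₀ hθpos]; linarith
        · refine ⟨(xi - θ * b) / (1 - θ), b, ?_, ?_, hb.le, le_rfl, ?_⟩
          · exact div_nonneg (by linarith) h1θ.le
          · rw [div_le_iff₀ h1θ]
            nlinarith [mul_le_mul_of_nonneg_left hqi hθ0]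
          · field_simp; ring
      obtain ⟨u₁, v₁, hu₁0, hu₁s, hv₁0, hv₁b, he₁⟩ := key x.1 s.1 w₁ hx1 hs1 hxy1 hw1b
      obtain ⟨u₂, v₂, hu₂0, hu₂s, hv₂0, hv₂b, he₂⟩ := key x.2 s.2 w₂ hx2 hs2 hxy2 hw2b
      exact ⟨(u₁, u₂), hcomp s hs (u₁, u₂) hu₁0 hu₂0 hu₁s hu₂s, θ, v₁, v₂,
        hθ0, hθ1, hv₁0, hv₁b, hv₂0, hv₂b, he₁, he₂⟩
    · -- s.2 < 0
      push_neg at hs2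
      rcases le_or_gt ((1 - θ) * s.1) x.1 with hcase | hcase
      · -- keep s, absorb into box
        refine ⟨s, hs, θ, (x.1 - (1 - θ) * s.1) / θ, (x.2 - (1 - θ) * s.2) / θ,
          hθ0, hθ1, ?_, ?_, ?_, ?_, by field_simp; ring, by field_simp; ring⟩
        · exact div_nonneg (by linarith) hθpos.le
        · rw [div_le_iff₀ hθpos]
          nlinarith [mul_le_mul_of_nonneg_left hw1b hθ0]
        · have hns : (1 - θ) * s.2 ≤ 0 :=
            mul_nonpos_of_nonneg_of_nonpos h1θ.le hs2.le
          exact div_nonneg (by linarith) hθpos.le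
        · rw [div_le_iff₀ hθpos]
          nlinarith [mul_le_mul_of_nonneg_left hw2b hθ0]
      · -- scale s down so that coordinate 1 is fully used
        have hs1pos : 0 < s.1 := by nlinarith
        set σ : ℝ := x.1 / ((1 - θ) * s.1) with hσ
        have hσ0 : 0 ≤ σ := div_nonneg hx1 (mul_nonneg h1θ.le hs1pos.le)
        have hσ1 : σ ≤ 1 := by
          rw [hσ, div_le_one (mul_pos h1θ hs1pos)]; linarith
        have hσs : (σ • s + (1 - σ) • ((0 : ℝ × ℝ))) ∈ S :=
          hconv hs h0S hσ0 (by linarith) (by ring)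
        have hσsS : ((σ * s.1, σ * s.2) : ℝ × ℝ) ∈ S := by
          have : (σ • s + (1 - σ) • ((0, 0) : ℝ × ℝ)) = ((σ * s.1, σ * s.2) : ℝ × ℝ) := by
            apply Prod.ext <;> simp [smul_eq_mul]
          rw [← this]
          exact hconv hs h0S hσ0 (by linarith) (by ring)
        have hx1eq : (1 - θ) * (σ * s.1) = x.1 := by
          rw [hσ]; field_simp
        have hs2σ : s.2 ≤ σ * s.2 := by
          nlinarith [mul_nonpos_of_nonneg_of_nonpos (by linarith : (0:ℝ) ≤ 1 - σ) hs2.le]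
        refine ⟨(σ * s.1, σ * s.2), hσsS, θ, 0, (x.2 - (1 - θ) * (σ * s.2)) / θ,
          hθ0, hθ1, le_rfl, hb.le, ?_, ?_, ?_, ?_⟩
        · have hns : (1 - θ) * (σ * s.2) ≤ 0 :=
            mul_nonpos_of_nonneg_of_nonpos h1θ.le
              (mul_nonpos_of_nonneg_of_nonpos hσ0 hs2.le)
          exact div_nonneg (by linarith) hθpos.le
        · rw [div_le_iff₀ hθpos]
          have hss : (1 - θ) * s.2 ≤ (1 - θ) * (σ * s.2) :=
            mul_le_mul_of_nonneg_left hs2σ h1θ.le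
          nlinarith [mul_le_mul_of_nonneg_left hw2b hθ0]
        · show x.1 = (1 - θ) * (σ * s.1) + θ * 0
          rw [hx1eq]; ring
        · show x.2 = (1 - θ) * (σ * s.2) + θ * ((x.2 - (1 - θ) * (σ * s.2)) / θ)
          field_simp; ring
  · -- s.1 < 0
    push_neg at hs1
    by_cases hs2 : 0 ≤ s.2
    · rcases le_or_gt ((1 - θ) * s.2) x.2 with hcase | hcase
      · refine ⟨s, hs, θ, (x.1 - (1 - θ) * s.1) / θ, (x.2 - (1 - θ) * s.2) / θ,
          hθ0, hθ1, ?_, ?_, ?_, ?_, by field_simp; ring, by field_simp; ring⟩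
        · have hns : (1 - θ) * s.1 ≤ 0 :=
            mul_nonpos_of_nonneg_of_nonpos h1θ.le hs1.le
          exact div_nonneg (by linarith) hθpos.le
        · rw [div_le_iff₀ hθpos]
          nlinarith [mul_le_mul_of_nonneg_left hw1b hθ0]
        · exact div_nonneg (by linarith) hθpos.le
        · rw [div_le_iff₀ hθpos]
          nlinarith [mul_le_mul_of_nonneg_left hw2b hθ0]
      · have hs2pos : 0 < s.2 := by nlinarith
        set σ : ℝ := x.2 / ((1 - θ) * s.2) with hσ
        have hσ0 : 0 ≤ σ := div_nonneg hx2 (mul_nonneg h1θ.le hs2pos.le)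
        have hσ1 : σ ≤ 1 := by
          rw [hσ, div_le_one (mul_pos h1θ hs2pos)]; linarith
        have hσsS : ((σ * s.1, σ * s.2) : ℝ × ℝ) ∈ S := by
          have : (σ • s + (1 - σ) • ((0, 0) : ℝ × ℝ)) = ((σ * s.1, σ * s.2) : ℝ × ℝ) := by
            apply Prod.ext <;> simp [smul_eq_mul]
          rw [← this]
          exact hconv hs h0S hσ0 (by linarith) (by ring)
        have hx2eq : (1 - θ) * (σ * s.2) = x.2 := by
          rw [hσ]; field_simp
        have hs1σ : s.1 ≤ σ * s.1 := by
          nlinarith [mul_nonpos_of_nonneg_of_nonpos (by linarith : (0:ℝ) ≤ 1 - σ) hs1.le]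
        refine ⟨(σ * s.1, σ * s.2), hσsS, θ, (x.1 - (1 - θ) * (σ * s.1)) / θ, 0,
          hθ0, hθ1, ?_, ?_, le_rfl, hb.le, ?_, ?_⟩
        · have hns : (1 - θ) * (σ * s.1) ≤ 0 :=
            mul_nonpos_of_nonneg_of_nonpos h1θ.le
              (mul_nonpos_of_nonneg_of_nonpos hσ0 hs1.le)
          exact div_nonneg (by linarith) hθpos.le
        · rw [div_le_iff₀ hθpos]
          have hss : (1 - θ) * s.1 ≤ (1 - θ) * (σ * s.1) :=
            mul_le_mul_of_nonneg_left hs1σ h1θ.le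
          nlinarith [mul_le_mul_of_nonneg_left hw1b hθ0]
        · show x.1 = (1 - θ) * (σ * s.1) + θ * ((x.1 - (1 - θ) * (σ * s.1)) / θ)
          field_simp; ring
        · show x.2 = (1 - θ) * (σ * s.2) + θ * 0
          rw [hx2eq]; ring
    · -- both negative: x is in the box
      push_neg at hs2
      have hb1 : x.1 ≤ b := by nlinarith [mul_le_mul_of_nonneg_left hw1b hθ0]
      have hb2 : x.2 ≤ b := by nlinarith [mul_le_mul_of_nonneg_left hw2b hθ0]
      exact ⟨(0, 0), h0S, 1, x.1, x.2, zero_le_one, le_rfl, hx1, hb1, hx2, hb2,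
        by ring, by ring⟩

set_option maxHeartbeats 1000000 in
/-- The join of a bargaining set with the box `[0,b]²` is a bargaining set. -/
lemma join_bargaining {S : Set (ℝ × ℝ)} (hS : BargainingSet S) {b : ℝ} (hb : 0 < b) :
    BargainingSet (convexJoin ℝ S (Icc ((0, 0) : ℝ × ℝ) (b, b))) := by
  obtain ⟨hne, hcpt, hconv, hcomp, p, hp, hp1, hp2⟩ := id hS
  have hBne : (Icc ((0, 0) : ℝ × ℝ) (b, b)).Nonempty :=
    ⟨(0, 0), Set.mem_Icc.mpr ⟨le_rfl, Prod.mk_le_mk.mpr ⟨hb.le, hb.le⟩⟩⟩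
  have hSsub : S ⊆ convexJoin ℝ S (Icc ((0, 0) : ℝ × ℝ) (b, b)) :=
    subset_convexJoin_left hBne
  refine ⟨⟨p, hSsub hp⟩, ?_, ?_, join_comprehensive hS hb, p, hSsub hp, hp1, hp2⟩
  · -- compact
    have heq : convexJoin ℝ S (Icc ((0, 0) : ℝ × ℝ) (b, b)) =
        (fun q : (ℝ × ℝ) × (ℝ × ℝ) × ℝ => (1 - q.2.2) • q.1 + q.2.2 • q.2.1) ''
          (S ×ˢ (Icc ((0, 0) : ℝ × ℝ) (b, b)) ×ˢ Icc (0 : ℝ) 1) := by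
      ext z
      constructor
      · intro hz
        rw [mem_convexJoin] at hz
        obtain ⟨s, hs, q, hq, hseg⟩ := hz
        rw [segment_eq_image] at hseg
        obtain ⟨θ, hθ, rfl⟩ := hseg
        exact ⟨(s, q, θ), ⟨hs, hq, hθ⟩, rfl⟩
      · rintro ⟨⟨s, q, θ⟩, ⟨hs, hq, hθ⟩, rfl⟩
        rw [mem_convexJoin]
        refine ⟨s, hs, q, hq, ?_⟩
        rw [segment_eq_image]
        exact ⟨θ, hθ, rfl⟩
    rw [heq]
    have hBcpt : IsCompact (Icc ((0, 0) : ℝ × ℝ) (b, b)) := isCompact_Icc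
    exact ((hcpt.prod (hBcpt.prod isCompact_Icc))).image
      (((continuous_const.sub continuous_snd.snd).smul continuous_fst).add
        (continuous_snd.snd.smul continuous_snd.fst))
  · -- convex
    have hBconv : Convex ℝ (Icc ((0, 0) : ℝ × ℝ) (b, b)) := convex_Icc _ _
    exact hconv.convexJoin hBconv

set_option maxHeartbeats 1000000 in
/-- Step 1: under the three axioms, `F S` dominates the egalitarian point. -/
lemma lower_bound
    (F : Set (ℝ × ℝ) → ℝ × ℝ)
    (hF : ∀ S, BargainingSet S → F S ∈ S)
    (hWPO : ∀ S, BargainingSet S → ¬ ∃ y ∈ S, (F S).1 < y.1 ∧ (F S).2 < y.2)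
    (hSYM : ∀ S, BargainingSet S →
        (fun x : ℝ × ℝ => (x.2, x.1)) '' S = S → (F S).1 = (F S).2)
    (hMONO : ∀ S S', BargainingSet S → BargainingSet S' → S ⊆ S' →
        (F S).1 ≤ (F S').1 ∧ (F S).2 ≤ (F S').2)
    {S : Set (ℝ × ℝ)} (hS : BargainingSet S) {a : ℝ}
    (ha : IsGreatest {t : ℝ | ((t, t) : ℝ × ℝ) ∈ S} a) :
    a ≤ (F S).1 ∧ a ≤ (F S).2 := by
  obtain ⟨hne, hcpt, hconv, hcomp, p, hp, hp1, hp2⟩ := id hS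
  set C : Set (ℝ × ℝ) := S ∩ (fun z : ℝ × ℝ => (z.2, z.1)) ⁻¹' S with hC
  have haC : ((a, a) : ℝ × ℝ) ∈ C := ⟨ha.1, by simpa using ha.1⟩
  have hswclosed : IsClosed ((fun z : ℝ × ℝ => (z.2, z.1)) ⁻¹' S) :=
    hcpt.isClosed.preimage (continuous_snd.prodMk continuous_fst)
  have hswconv : Convex ℝ ((fun z : ℝ × ℝ => (z.2, z.1)) ⁻¹' S) := by
    intro u hu v hv α β hα hβ hαβ
    simp only [Set.mem_preimage] at hu hv ⊢
    have h := hconv hu hv hα hβ hαβ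
    have heq : ((α • u + β • v).2, (α • u + β • v).1) =
        α • ((u.2, u.1) : ℝ × ℝ) + β • ((v.2, v.1) : ℝ × ℝ) := by
      apply Prod.ext <;> simp
    rw [heq]
    exact h
  have hm : ((min p.1 p.2, min p.1 p.2) : ℝ × ℝ) ∈ S :=
    hcomp p hp _ (le_min hp1.le hp2.le) (le_min hp1.le hp2.le) (min_le_left _ _)
      (min_le_right _ _)
  have hCB : BargainingSet C := by
    refine ⟨⟨(a, a), haC⟩, hcpt.inter_right hswclosed, hconv.inter hswconv, ?_,
      (min p.1 p.2, min p.1 p.2), ⟨hm, by simpa using hm⟩, lt_min hp1 hp2, lt_min hp1 hp2⟩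
    intro y hy x hx1 hx2 hxy1 hxy2
    refine ⟨hcomp y hy.1 x hx1 hx2 hxy1 hxy2, ?_⟩
    have hy2 : ((y.2, y.1) : ℝ × ℝ) ∈ S := hy.2
    exact Set.mem_preimage.mpr (hcomp (y.2, y.1) hy2 (x.2, x.1) hx2 hx1 hxy2 hxy1)
  have himg : (fun x : ℝ × ℝ => (x.2, x.1)) '' C = C := by
    ext z
    constructor
    · rintro ⟨w, ⟨hw1, hw2⟩, rfl⟩
      exact ⟨hw2, by simpa using hw1⟩
    · intro hz
      exact ⟨(z.2, z.1), ⟨hz.2, by simpa using hz.1⟩, rfl⟩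
  have hcc : (F C).1 = (F C).2 := hSYM C hCB himg
  have hFCC : F C ∈ C := hF C hCB
  have hdiag : (((F C).1, (F C).1) : ℝ × ℝ) ∈ S := by
    have : (((F C).1, (F C).2) : ℝ × ℝ) ∈ S := by
      simpa using hFCC.1
    rwa [← hcc] at this
  have hle : (F C).1 ≤ a := ha.2 hdiag
  have heq : (F C).1 = a := by
    rcases eq_or_lt_of_le hle with h | h
    · exact h
    · exfalso
      exact hWPO C hCB ⟨(a, a), haC, h, by rw [← hcc]; exact h⟩
  have hmono := hMONO C S hCB hS Set.inter_subset_left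
  constructor
  · calc a = (F C).1 := heq.symm
      _ ≤ (F S).1 := hmono.1
  · calc a = (F C).1 := heq.symm
      _ = (F C).2 := hcc
      _ ≤ (F S).2 := hmono.2

end EgalAux

open EgalAux in
set_option maxHeartbeats 1000000 in
/-- A bargaining solution `F` satisfies weak Pareto optimality, symmetry, and strong
monotonicity if and only if it is the egalitarian solution
`F(S) = (a_S, a_S)` with `a_S = max {t | (t,t) ∈ S}`. -/
theorem egalitarian_characterization
    (F : Set (ℝ × ℝ) → ℝ × ℝ)
    (hF : ∀ S, BargainingSet S → F S ∈ S) :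
    ((∀ S, BargainingSet S → ¬ ∃ y ∈ S, (F S).1 < y.1 ∧ (F S).2 < y.2) ∧
     (∀ S, BargainingSet S →
        (fun x : ℝ × ℝ => (x.2, x.1)) '' S = S → (F S).1 = (F S).2) ∧
     (∀ S S', BargainingSet S → BargainingSet S' → S ⊆ S' →
        (F S).1 ≤ (F S').1 ∧ (F S).2 ≤ (F S').2))
    ↔
    (∀ S, BargainingSet S →
      ∃ a : ℝ, IsGreatest {t : ℝ | ((t, t) : ℝ × ℝ) ∈ S} a ∧ F S = (a, a)) := by
  constructor
  · rintro ⟨hWPO, hSYM, hMONO⟩ S hS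
    obtain ⟨a, ha, ha0⟩ := exists_greatest hS
    refine ⟨a, ha, ?_⟩
    obtain ⟨h1, h2⟩ := lower_bound F hF hWPO hSYM hMONO hS ha
    by_contra hne
    have hxS : F S ∈ S := hF S hS
    -- v is the larger coordinate; it exceeds a
    set v : ℝ := max (F S).1 (F S).2 with hv
    have hav : a < v := by
      rcases eq_or_lt_of_le h1 with hh1 | hh1
      · rcases eq_or_lt_of_le h2 with hh2 | hh2
        · exact absurd (Prod.ext hh1.symm hh2.symm) hne
        · exact lt_of_lt_of_le hh2 (le_max_right _ _)
      · exact lt_of_lt_of_le hh1 (le_max_left _ _)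
    set b : ℝ := (a + v) / 2 with hbdef
    have hab : a < b := by rw [hbdef]; linarith
    have hbv : b < v := by rw [hbdef]; linarith
    have hb0 : 0 < b := lt_trans ha0 hab
    set T : Set (ℝ × ℝ) := convexJoin ℝ S (Icc ((0, 0) : ℝ × ℝ) (b, b)) with hT
    have hTB : BargainingSet T := join_bargaining hS hb0
    have hBne : (Icc ((0, 0) : ℝ × ℝ) (b, b)).Nonempty :=
      ⟨(0, 0), Set.mem_Icc.mpr ⟨le_rfl, Prod.mk_le_mk.mpr ⟨hb0.le, hb0.le⟩⟩⟩
    have hST : S ⊆ T := subset_convexJoin_left hBne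
    -- the egalitarian level of T is b
    have hbT : IsGreatest {t : ℝ | ((t, t) : ℝ × ℝ) ∈ T} b := by
      constructor
      · show ((b, b) : ℝ × ℝ) ∈ T
        rw [hT, mem_join_iff]
        exact ⟨(0, 0), zero_mem hS, 1, b, b, zero_le_one, le_rfl, hb0.le, le_rfl, hb0.le,
          le_rfl, by ring, by ring⟩
      · intro t ht
        have ht' : ((t, t) : ℝ × ℝ) ∈ T := ht
        rw [hT, mem_join_iff] at ht'
        obtain ⟨s, hs, θ, w₁, w₂, hθ0, hθ1, hw10, hw1b, hw20, hw2b, he1, he2⟩ := ht'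
        simp only at he1 he2
        rcases le_or_le hS ha ha0 hs with hsa | hsa
        · have h1 : (1 - θ) * s.1 ≤ (1 - θ) * a :=
            mul_le_mul_of_nonneg_left hsa (by linarith)
          have h2 : θ * w₁ ≤ θ * b := mul_le_mul_of_nonneg_left hw1b hθ0
          nlinarith
        · have h1 : (1 - θ) * s.2 ≤ (1 - θ) * a :=
            mul_le_mul_of_nonneg_left hsa (by linarith)
          have h2 : θ * w₂ ≤ θ * b := mul_le_mul_of_nonneg_left hw2b hθ0
          nlinarith
    -- F T dominates (b, b)
    obtain ⟨hFT1, hFT2⟩ := lower_bound F hF hWPO hSYM hMONO hTB hbT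
    -- F T is at most (b, b)
    have hFTmem : F T ∈ T := hF T hTB
    have hFTle : (F T).1 ≤ b ∧ (F T).2 ≤ b := by
      rw [hT, mem_join_iff] at hFTmem
      obtain ⟨s, hs, θ, w₁, w₂, hθ0, hθ1, hw10, hw1b, hw20, hw2b, he1, he2⟩ := hFTmem
      rcases eq_or_lt_of_le hθ1 with hθtop | hθlt
      · subst hθtop
        constructor
        · rw [he1]; linarith
        · rw [he2]; linarith
      · exfalso
        have h1θ : (0 : ℝ) < 1 - θ := by linarith
        have hs1 : a < s.1 := by
          have hq : θ * w₁ ≤ θ * b := mul_le_mul_of_nonneg_left hw1b hθ0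
          have : b ≤ (1 - θ) * s.1 + θ * w₁ := by rw [← he1]; exact hFT1
          nlinarith
        have hs2 : a < s.2 := by
          have hq : θ * w₂ ≤ θ * b := mul_le_mul_of_nonneg_left hw2b hθ0
          have : b ≤ (1 - θ) * s.2 + θ * w₂ := by rw [← he2]; exact hFT2
          nlinarith
        rcases le_or_le hS ha ha0 hs with h | h <;> linarith
    -- monotonicity gives the contradiction
    obtain ⟨hm1, hm2⟩ := hMONO S T hS hTB hST
    have : v ≤ b := by
      rw [hv]
      exact max_le (hm1.trans hFTle.1) (hm2.trans hFTle.2)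
    linarith
  · intro hE
    refine ⟨?_, ?_, ?_⟩
    · intro S hS
      obtain ⟨a, ha, hFa⟩ := hE S hS
      obtain ⟨a', ha', ha'0⟩ := exists_greatest hS
      have haa : a = a' := le_antisymm (ha'.2 ha.1) (ha.2 ha'.1)
      rintro ⟨y, hy, hy1, hy2⟩
      rw [hFa] at hy1 hy2
      simp only at hy1 hy2
      rcases le_or_le hS ha' (haa ▸ ha'0) hy with h | h
      · rw [← haa] at h; linarith
      · rw [← haa] at h; linarith
    · intro S hS _
      obtain ⟨a, _, hFa⟩ := hE S hS
      rw [hFa]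
    · intro S S' hS hS' hsub
      obtain ⟨a, ha, hFa⟩ := hE S hS
      obtain ⟨a', ha', hFa'⟩ := hE S' hS'
      have : a ≤ a' := ha'.2 (hsub ha.1)
      rw [hFa, hFa']
      exact ⟨this, this⟩
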